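/- For every d ≥ 3 and n ≥ 3, the full cyclic transversal polytope is strictly contained in the set cut out of the transversal polytope by all lifted odd-set inequalities: CTP[d,n] ⊊ { x ∈ TP[d,n] : x satisfies the LOS inequality associated with η and I for every nonzero η ∈ 𝔽₂^d and every I ⊆ [n] of odd cardinality }. -/
import Mathlib


open scoped Classical

/-- The field `𝔽₂^d`, represented as functions `Fin d → ZMod 2`. -/
abbrev F2 (d : ℕ) : Type := Fin d → ZMod 2

/-- A cyclic transversal of a block configuration `B`. -/
def IsCyclicTransversal {d n : ℕ} (B : Fin n → Set (F2 d)) (ξ : Fin n → F2 d) : Prop :=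
  (∀ i, ξ i ∈ B i) ∧ (∑ i, ξ i) = 0

/-- The incidence vector of a transversal. -/
noncomputable def incVec {d n : ℕ} (ξ : Fin n → F2 d) : Fin n → F2 d → ℝ :=
  fun i ω => if ξ i = ω then 1 else 0

/-- The cyclic transversal polytope of a block configuration. -/
noncomputable def CTP {d n : ℕ} (B : Fin n → Set (F2 d)) : Set (Fin n → F2 d → ℝ) :=
  convexHull ℝ (incVec '' { ξ | IsCyclicTransversal B ξ })

/-- The transversal polytope of a block configuration. -/
def TP {d n : ℕ} (B : Fin n → Set (F2 d)) : Set (Fin n → F2 d → ℝ) :=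
  { x | (∀ i ω, 0 ≤ x i ω) ∧ (∀ i ω, ω ∉ B i → x i ω = 0) ∧ ∀ i, (∑ ω : F2 d, x i ω) = 1 }

/-- The size of a block configuration. -/
noncomputable def blockSize {d n : ℕ} (B : Fin n → Set (F2 d)) : ℕ := ∑ i, (B i).ncard

/-- The rank of a block configuration. -/
noncomputable def blockRank {d n : ℕ} (B : Fin n → Set (F2 d)) : ℕ :=
  Module.finrank (ZMod 2) (Submodule.span (ZMod 2) (⋃ i, B i))

/-- Two sets of real vectors are affinely isomorphic. -/
def AffIso {α β : Type*} [AddCommGroup α] [Module ℝ α] [AddCommGroup β] [Module ℝ β]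
    (P : Set α) (Q : Set β) : Prop :=
  ∃ f : α →ᵃ[ℝ] β, Set.InjOn f P ∧ f '' P = Q

/-- The left-hand side of the lifted odd-set (LOS) inequality associated with `η` and `I`. -/
noncomputable def losLHS {d n : ℕ} (B : Fin n → Set (F2 d)) (η : F2 d) (I : Finset (Fin n))
    (x : Fin n → F2 d → ℝ) : ℝ :=
  (∑ i ∈ I, ∑ ω ∈ Finset.univ.filter (fun ω : F2 d => ω ∈ B i ∧ (∑ j, η j * ω j) = 0), x i ω) +
  (∑ i ∈ Iᶜ, ∑ ω ∈ Finset.univ.filter (fun ω : F2 d => ω ∈ B i ∧ (∑ j, η j * ω j) = 1), x i ω)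

/-- for `d ≥ 3`, `n ≥ 3`, the LOS inequalities do not suffice to describe
the full CTP. -/
lemma zmod2_cases (a : ZMod 2) : a = 0 ∨ a = 1 := by revert a; decide

lemma sum_ind {d : ℕ} (p : F2 d) (r : ℝ) : (∑ ω : F2 d, if ω = p then r else 0) = r := by
  rw [Finset.sum_ite_eq' Finset.univ p (fun _ => r)]; simp

lemma sum_filter_ind {d : ℕ} (Q : F2 d → Prop) [DecidablePred Q] (p : F2 d) (r : ℝ) :
    (∑ ω ∈ Finset.univ.filter Q, if ω = p then r else 0) = if Q p then r else 0 := by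
  rw [Finset.sum_ite_eq' (Finset.univ.filter Q) p (fun _ => r)]
  simp

lemma sum_filter_ind' {d : ℕ} (Q : F2 d → Prop) [DecidablePred Q] (p : F2 d) (r : ℝ) :
    (∑ ω ∈ Finset.univ.filter Q, if p = ω then r else 0) = if Q p then r else 0 := by
  rw [Finset.sum_ite_eq (Finset.univ.filter Q) p (fun _ => r)]
  simp

noncomputable def pt (d : ℕ) (α β γ : ZMod 2) : F2 d := fun j =>
  if (j : ℕ) = 0 then α else if (j : ℕ) = 1 then β else if (j : ℕ) = 2 then γ else 0

lemma pt_zero (d : ℕ) : pt d 0 0 0 = 0 := by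
  funext j; simp [pt]

lemma dot_pt {d : ℕ} (hd : 3 ≤ d) (η : F2 d) (α β γ : ZMod 2) :
    (∑ j, η j * pt d α β γ j) =
      η ⟨0, by omega⟩ * α + η ⟨1, by omega⟩ * β + η ⟨2, by omega⟩ * γ := by
  have h0 : (0:ℕ) < d := by omega
  have h1 : (1:ℕ) < d := by omega
  have h2 : (2:ℕ) < d := by omega
  rw [← Finset.sum_subset (Finset.subset_univ ({⟨0,h0⟩, ⟨1,h1⟩, ⟨2,h2⟩} : Finset (Fin d)))]
  · rw [Finset.sum_insert (by simp [Fin.ext_iff]), Finset.sum_insert (by simp [Fin.ext_iff]),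
      Finset.sum_singleton]
    simp [pt]; ring
  · intro j _ hj
    simp only [Finset.mem_insert, Finset.mem_singleton] at hj
    push_neg at hj
    obtain ⟨hj0, hj1, hj2⟩ := hj
    have : pt d α β γ j = 0 := by
      simp only [pt]
      rw [if_neg, if_neg, if_neg]
      · intro h; exact hj2 (Fin.ext h)
      · intro h; exact hj1 (Fin.ext h)
      · intro h; exact hj0 (Fin.ext h)
    rw [this, mul_zero]

noncomputable def xpt (d n : ℕ) : Fin n → F2 d → ℝ := fun i ω =>
  if (i : ℕ) = 0 then
    (if ω = pt d 0 0 0 then (4:ℝ)⁻¹ else 0) + (if ω = pt d 0 1 1 then (4:ℝ)⁻¹ else 0) +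
    (if ω = pt d 1 0 0 then (4:ℝ)⁻¹ else 0) + (if ω = pt d 1 0 1 then (4:ℝ)⁻¹ else 0)
  else if (i : ℕ) = 1 then
    (if ω = pt d 0 0 0 then (2:ℝ)⁻¹ else 0) + (if ω = pt d 0 1 0 then (2:ℝ)⁻¹ else 0)
  else if (i : ℕ) = 2 then
    (if ω = pt d 0 0 1 then (4:ℝ)⁻¹ else 0) + (if ω = pt d 0 1 0 then (4:ℝ)⁻¹ else 0) +
    (if ω = pt d 1 1 0 then (4:ℝ)⁻¹ else 0) + (if ω = pt d 1 1 1 then (4:ℝ)⁻¹ else 0)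
  else (if ω = pt d 0 0 0 then 1 else 0)

lemma xpt_nonneg (d n : ℕ) (i : Fin n) (ω : F2 d) : 0 ≤ xpt d n i ω := by
  unfold xpt; split_ifs <;> norm_num

lemma xpt_sum (d n : ℕ) (i : Fin n) : (∑ ω : F2 d, xpt d n i ω) = 1 := by
  unfold xpt
  split_ifs with h0 h1 h2 <;>
    simp only [Finset.sum_add_distrib, sum_ind] <;> norm_num

lemma xpt_fsum0 {d n : ℕ} (i : Fin n) (hi : (i:ℕ) = 0) (Q : F2 d → Prop) [DecidablePred Q] :
    (∑ ω ∈ Finset.univ.filter Q, xpt d n i ω) =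
      (if Q (pt d 0 0 0) then (4:ℝ)⁻¹ else 0) + (if Q (pt d 0 1 1) then (4:ℝ)⁻¹ else 0) +
      (if Q (pt d 1 0 0) then (4:ℝ)⁻¹ else 0) + (if Q (pt d 1 0 1) then (4:ℝ)⁻¹ else 0) := by
  simp only [xpt, hi, if_true, Finset.sum_add_distrib, sum_filter_ind]

lemma xpt_fsum1 {d n : ℕ} (i : Fin n) (hi : (i:ℕ) = 1) (Q : F2 d → Prop) [DecidablePred Q] :
    (∑ ω ∈ Finset.univ.filter Q, xpt d n i ω) =
      (if Q (pt d 0 0 0) then (2:ℝ)⁻¹ else 0) + (if Q (pt d 0 1 0) then (2:ℝ)⁻¹ else 0) := by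
  simp only [xpt, hi]
  norm_num [Finset.sum_add_distrib, sum_filter_ind]

lemma xpt_fsum2 {d n : ℕ} (i : Fin n) (hi : (i:ℕ) = 2) (Q : F2 d → Prop) [DecidablePred Q] :
    (∑ ω ∈ Finset.univ.filter Q, xpt d n i ω) =
      (if Q (pt d 0 0 1) then (4:ℝ)⁻¹ else 0) + (if Q (pt d 0 1 0) then (4:ℝ)⁻¹ else 0) +
      (if Q (pt d 1 1 0) then (4:ℝ)⁻¹ else 0) + (if Q (pt d 1 1 1) then (4:ℝ)⁻¹ else 0) := by
  simp only [xpt, hi]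
  norm_num [Finset.sum_add_distrib, sum_filter_ind]

lemma xpt_fsum3 {d n : ℕ} (i : Fin n) (hi : 3 ≤ (i:ℕ)) (Q : F2 d → Prop) [DecidablePred Q] :
    (∑ ω ∈ Finset.univ.filter Q, xpt d n i ω) =
      (if Q (pt d 0 0 0) then (1:ℝ) else 0) := by
  have h0 : ¬ ((i:ℕ) = 0) := by omega
  have h1 : ¬ ((i:ℕ) = 1) := by omega
  have h2 : ¬ ((i:ℕ) = 2) := by omega
  simp only [xpt, h0, h1, h2, if_false, sum_filter_ind]

lemma xpt_los {d n : ℕ} (hd : 3 ≤ d) (hn : 3 ≤ n) (η : F2 d) (I : Finset (Fin n))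
    (hI : Odd I.card) : 1 ≤ losLHS (fun _ : Fin n => (Set.univ : Set (F2 d))) η I (xpt d n) := by
  have h0 : (0:ℕ) < d := by omega
  have h1 : (1:ℕ) < d := by omega
  have h2 : (2:ℕ) < d := by omega
  set a := η ⟨0, h0⟩ with ha
  set b := η ⟨1, h1⟩ with hb
  set c := η ⟨2, h2⟩ with hc
  -- the filtered-sum values
  have hdot : ∀ α β γ : ZMod 2, (∑ j, η j * pt d α β γ j) = a*α + b*β + c*γ := by
    intro α β γ; rw [dot_pt hd]
  have hQ : ∀ v α β γ : ZMod 2,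
      ((pt d α β γ ∈ (Set.univ : Set (F2 d)) ∧ (∑ j, η j * pt d α β γ j) = v)) ↔
        (a*α + b*β + c*γ = v) := by
    intro v α β γ; rw [hdot]; simp
  -- nonnegativity of all inner sums
  have hnn : ∀ (i : Fin n) (v : ZMod 2),
      0 ≤ ∑ ω ∈ Finset.univ.filter
        (fun ω : F2 d => (∑ j, η j * ω j) = v), xpt d n i ω := by
    intro i v
    exact Finset.sum_nonneg fun ω _ => xpt_nonneg d n i ω
  simp only [losLHS, Set.mem_univ, true_and, Finset.filter_congr_decidable]
  set f0 : Fin n → ℝ := fun i => ∑ ω ∈ Finset.univ.filter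
      (fun ω : F2 d => (∑ j, η j * ω j) = 0), xpt d n i ω with hf0
  set f1 : Fin n → ℝ := fun i => ∑ ω ∈ Finset.univ.filter
      (fun ω : F2 d => (∑ j, η j * ω j) = 1), xpt d n i ω with hf1
  by_cases hbig : ∃ i ∈ I, 3 ≤ (i:ℕ)
  · -- some large index in I: its f0 equals 1
    obtain ⟨i, hiI, hi3⟩ := hbig
    have : f0 i = 1 := by
      have e := xpt_fsum3 (Q := fun ω : F2 d => (∑ j, η j * ω j) = (0:ZMod 2)) i hi3
      rw [show f0 i = _ from e, if_pos]
      rw [hdot]; ring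
    have hle : (1:ℝ) ≤ ∑ i ∈ I, f0 i := by
      rw [← this]
      exact Finset.single_le_sum (fun j _ => hnn j 0) hiI
    have := Finset.sum_nonneg (fun j (_ : j ∈ Iᶜ) => hnn j 1)
    linarith
  · push_neg at hbig
    -- I ⊆ {i0, i1, i2}
    set i0 : Fin n := ⟨0, by omega⟩ with hi0
    set i1 : Fin n := ⟨1, by omega⟩ with hi1
    set i2 : Fin n := ⟨2, by omega⟩ with hi2
    have hne01 : i0 ≠ i1 := by simp [hi0, hi1, Fin.ext_iff]
    have hne02 : i0 ≠ i2 := by simp [hi0, hi2, Fin.ext_iff]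
    have hne12 : i1 ≠ i2 := by simp [hi1, hi2, Fin.ext_iff]
    set T : Finset (Fin n) := {i0, i1, i2} with hT
    have hIT : I ⊆ T := by
      intro i hi
      have h3 := hbig i hi
      simp only [hT, Finset.mem_insert, Finset.mem_singleton]
      rcases (by omega : (i:ℕ) = 0 ∨ (i:ℕ) = 1 ∨ (i:ℕ) = 2) with h | h | h
      · left; exact Fin.ext h
      · right; left; exact Fin.ext h
      · right; right; exact Fin.ext h
    have hTcard : T.card = 3 := by
      rw [hT, Finset.card_insert_of_notMem (by simp [hne01, hne02]),
        Finset.card_insert_of_notMem (by simp [hne12]), Finset.card_singleton]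
    -- values of f0 and f1 on i0 i1 i2
    have h0v : ∀ v : ZMod 2, (∑ ω ∈ Finset.univ.filter
        (fun ω : F2 d => (∑ j, η j * ω j) = v), xpt d n i0 ω) =
        (if a*0+b*0+c*0 = v then (4:ℝ)⁻¹ else 0) + (if a*0+b*1+c*1 = v then (4:ℝ)⁻¹ else 0) +
        (if a*1+b*0+c*0 = v then (4:ℝ)⁻¹ else 0) + (if a*1+b*0+c*1 = v then (4:ℝ)⁻¹ else 0) := by
      intro v; rw [xpt_fsum0 i0 rfl]; simp only [hdot]
    have h1v : ∀ v : ZMod 2, (∑ ω ∈ Finset.univ.filter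
        (fun ω : F2 d => (∑ j, η j * ω j) = v), xpt d n i1 ω) =
        (if a*0+b*0+c*0 = v then (2:ℝ)⁻¹ else 0) + (if a*0+b*1+c*0 = v then (2:ℝ)⁻¹ else 0) := by
      intro v; rw [xpt_fsum1 i1 rfl]; simp only [hdot]
    have h2v : ∀ v : ZMod 2, (∑ ω ∈ Finset.univ.filter
        (fun ω : F2 d => (∑ j, η j * ω j) = v), xpt d n i2 ω) =
        (if a*0+b*0+c*1 = v then (4:ℝ)⁻¹ else 0) + (if a*0+b*1+c*0 = v then (4:ℝ)⁻¹ else 0) +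
        (if a*1+b*1+c*0 = v then (4:ℝ)⁻¹ else 0) + (if a*1+b*1+c*1 = v then (4:ℝ)⁻¹ else 0) := by
      intro v; rw [xpt_fsum2 i2 rfl]; simp only [hdot]
    have hcard13 : I.card = 1 ∨ I.card = 3 := by
      have hle := Finset.card_le_card hIT
      rw [hTcard] at hle
      obtain ⟨k, hk⟩ := hI
      omega
    have pairbound : ∀ j1 j2 : Fin n, j1 ≠ j2 → j1 ∈ Iᶜ → j2 ∈ Iᶜ →
        f1 j1 + f1 j2 ≤ ∑ i ∈ Iᶜ, f1 i := by
      intro j1 j2 hne hj1 hj2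
      have hsub : ({j1, j2} : Finset (Fin n)) ⊆ Iᶜ := by
        intro z hz
        simp only [Finset.mem_insert, Finset.mem_singleton] at hz
        rcases hz with rfl | rfl <;> assumption
      calc f1 j1 + f1 j2 = ∑ i ∈ ({j1, j2} : Finset (Fin n)), f1 i := by
            rw [Finset.sum_insert (by simp [hne]), Finset.sum_singleton]
        _ ≤ ∑ i ∈ Iᶜ, f1 i :=
            Finset.sum_le_sum_of_subset_of_nonneg hsub (fun j _ _ => hnn j 1)
    rcases hcard13 with hc1 | hc3
    · obtain ⟨j, rfl⟩ := Finset.card_eq_one.mp hc1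
      have hjT : j ∈ T := hIT (Finset.mem_singleton_self j)
      rw [Finset.sum_singleton]
      simp only [hT, Finset.mem_insert, Finset.mem_singleton] at hjT
      have hmemc : ∀ z : Fin n, z ≠ j → z ∈ ({j} : Finset (Fin n))ᶜ := by
        intro z hz; simp [Finset.mem_compl, hz]
      rcases hjT with rfl | rfl | rfl
      · have hb2 := pairbound i1 i2 hne12 (hmemc i1 hne01.symm) (hmemc i2 hne02.symm)
        have hval : (1:ℝ) ≤ f0 i0 + (f1 i1 + f1 i2) := by
          have e0 : f0 i0 = _ := h0v 0
          have e1 : f1 i1 = _ := h1v 1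
          have e2 : f1 i2 = _ := h2v 1
          rw [e0, e1, e2]
          rcases zmod2_cases a with ha' | ha' <;> rcases zmod2_cases b with hb' | hb' <;>
            rcases zmod2_cases c with hc' | hc' <;> rw [ha', hb', hc'] <;>
            simp (config := { decide := true }) <;> norm_num
        linarith
      · have hb2 := pairbound i0 i2 hne02 (hmemc i0 hne01) (hmemc i2 hne12.symm)
        have hval : (1:ℝ) ≤ f0 i1 + (f1 i0 + f1 i2) := by
          have e0 : f0 i1 = _ := h1v 0
          have e1 : f1 i0 = _ := h0v 1
          have e2 : f1 i2 = _ := h2v 1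
          rw [e0, e1, e2]
          rcases zmod2_cases a with ha' | ha' <;> rcases zmod2_cases b with hb' | hb' <;>
            rcases zmod2_cases c with hc' | hc' <;> rw [ha', hb', hc'] <;>
            simp (config := { decide := true }) <;> norm_num
        linarith
      · have hb2 := pairbound i0 i1 hne01 (hmemc i0 hne02) (hmemc i1 hne12)
        have hval : (1:ℝ) ≤ f0 i2 + (f1 i0 + f1 i1) := by
          have e0 : f0 i2 = _ := h2v 0
          have e1 : f1 i0 = _ := h0v 1
          have e2 : f1 i1 = _ := h1v 1
          rw [e0, e1, e2]
          rcases zmod2_cases a with ha' | ha' <;> rcases zmod2_cases b with hb' | hb' <;>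
            rcases zmod2_cases c with hc' | hc' <;> rw [ha', hb', hc'] <;>
            simp (config := { decide := true }) <;> norm_num
        linarith
    · have hIeqT : I = T := Finset.eq_of_subset_of_card_le hIT (by omega)
      have hsum : ∑ i ∈ I, f0 i = f0 i0 + f0 i1 + f0 i2 := by
        rw [hIeqT, hT, Finset.sum_insert (by simp [hne01, hne02]),
          Finset.sum_insert (by simp [hne12]), Finset.sum_singleton]
        ring
      have hnneg := Finset.sum_nonneg (fun j (_ : j ∈ Iᶜ) => hnn j 1)
      have hval : (1:ℝ) ≤ f0 i0 + f0 i1 + f0 i2 := by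
        have e0 : f0 i0 = _ := h0v 0
        have e1 : f0 i1 = _ := h1v 0
        have e2 : f0 i2 = _ := h2v 0
        rw [e0, e1, e2]
        rcases zmod2_cases a with ha' | ha' <;> rcases zmod2_cases b with hb' | hb' <;>
          rcases zmod2_cases c with hc' | hc' <;> rw [ha', hb', hc'] <;>
          simp (config := { decide := true }) <;> norm_num
      linarith

lemma odd_card_cast (m : ℕ) (hm : Odd m) : (m : ZMod 2) = 1 := by
  obtain ⟨k, rfl⟩ := hm
  push_cast
  rw [show ((2:ZMod 2)) = 0 from rfl]
  ring

lemma zmod2_add_eq_zero {u v : ZMod 2} (h : u + v = 0) : v = u := by revert u v; decide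

lemma incVec_tp {d n : ℕ} (ξ : Fin n → F2 d) :
    incVec ξ ∈ TP (fun _ : Fin n => (Set.univ : Set (F2 d))) := by
  refine ⟨fun i ω => ?_, fun i ω h => absurd (Set.mem_univ ω) h, fun i => ?_⟩
  · unfold incVec; split <;> norm_num
  · unfold incVec
    rw [Finset.sum_ite_eq Finset.univ (ξ i) (fun _ => (1:ℝ))]
    simp

lemma incVec_los {d n : ℕ} (ξ : Fin n → F2 d) (hξ : (∑ i, ξ i) = 0) (η : F2 d)
    (I : Finset (Fin n)) (hI : Odd I.card) :
    1 ≤ losLHS (fun _ : Fin n => (Set.univ : Set (F2 d))) η I (incVec ξ) := by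
  simp only [losLHS, Set.mem_univ, true_and, Finset.filter_congr_decidable]
  have key : ∀ (i : Fin n) (v : ZMod 2),
      (∑ ω ∈ Finset.univ.filter (fun ω : F2 d => (∑ j, η j * ω j) = v), incVec ξ i ω) =
        if (∑ j, η j * ξ i j) = v then (1:ℝ) else 0 := by
    intro i v
    exact sum_filter_ind' (fun ω : F2 d => (∑ j, η j * ω j) = v) (ξ i) 1
  have hnn : ∀ (i : Fin n) (v : ZMod 2),
      (0:ℝ) ≤ ∑ ω ∈ Finset.univ.filter (fun ω : F2 d => (∑ j, η j * ω j) = v), incVec ξ i ω := by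
    intro i v
    refine Finset.sum_nonneg fun ω _ => ?_
    unfold incVec; split <;> norm_num
  have hex : (∃ i ∈ I, (∑ j, η j * ξ i j) = 0) ∨ (∃ i ∈ Iᶜ, (∑ j, η j * ξ i j) = 1) := by
    by_contra hcon
    push_neg at hcon
    obtain ⟨hA, hB⟩ := hcon
    have hA' : ∀ i ∈ I, (∑ j, η j * ξ i j) = 1 := by
      intro i hi
      rcases zmod2_cases (∑ j, η j * ξ i j) with h | h
      · exact absurd h (hA i hi)
      · exact h
    have hB' : ∀ i ∈ Iᶜ, (∑ j, η j * ξ i j) = 0 := by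
      intro i hi
      rcases zmod2_cases (∑ j, η j * ξ i j) with h | h
      · exact h
      · exact absurd h (hB i hi)
    have hS0 : (∑ i, ∑ j, η j * ξ i j) = 0 := by
      rw [Finset.sum_comm]
      have : ∀ j : Fin d, (∑ i, η j * ξ i j) = 0 := by
        intro j
        rw [← Finset.mul_sum]
        have : (∑ i, ξ i j) = 0 := by
          have := congrFun hξ j
          rwa [Finset.sum_apply] at this
        rw [this, mul_zero]
      simp [this]
    have hS1 : (∑ i, ∑ j, η j * ξ i j) = 1 := by
      rw [← Finset.sum_add_sum_compl I]
      rw [Finset.sum_congr rfl hA', Finset.sum_congr rfl hB']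
      rw [Finset.sum_const, Finset.sum_const, smul_zero, add_zero, nsmul_eq_mul, mul_one]
      exact odd_card_cast I.card hI
    rw [hS0] at hS1
    exact absurd hS1 (by decide)
  rcases hex with ⟨i, hi, h⟩ | ⟨i, hi, h⟩
  · have h1 : (∑ ω ∈ Finset.univ.filter (fun ω : F2 d => (∑ j, η j * ω j) = 0),
        incVec ξ i ω) = 1 := by rw [key i 0, if_pos h]
    have hle : (1:ℝ) ≤ ∑ i ∈ I, ∑ ω ∈ Finset.univ.filter
        (fun ω : F2 d => (∑ j, η j * ω j) = 0), incVec ξ i ω := by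
      rw [← h1]
      exact Finset.single_le_sum (fun j _ => hnn j 0) hi
    have := Finset.sum_nonneg (fun j (_ : j ∈ Iᶜ) => hnn j 1)
    linarith
  · have h1 : (∑ ω ∈ Finset.univ.filter (fun ω : F2 d => (∑ j, η j * ω j) = 1),
        incVec ξ i ω) = 1 := by rw [key i 1, if_pos h]
    have hle : (1:ℝ) ≤ ∑ i ∈ Iᶜ, ∑ ω ∈ Finset.univ.filter
        (fun ω : F2 d => (∑ j, η j * ω j) = 1), incVec ξ i ω := by
      rw [← h1]
      exact Finset.single_le_sum (fun j _ => hnn j 1) hi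
    have := Finset.sum_nonneg (fun j (_ : j ∈ I) => hnn j 0)
    linarith

lemma losLHS_lin {d n : ℕ} (B : Fin n → Set (F2 d)) (η : F2 d) (I : Finset (Fin n))
    (u v : Fin n → F2 d → ℝ) (p q : ℝ) :
    losLHS B η I (p • u + q • v) = p * losLHS B η I u + q * losLHS B η I v := by
  simp only [losLHS, Pi.add_apply, Pi.smul_apply, smul_eq_mul, Finset.sum_add_distrib,
    mul_add, Finset.mul_sum]
  ring

lemma xpt_notMem {d n : ℕ} (hd : 3 ≤ d) (hn : 3 ≤ n) :
    xpt d n ∉ CTP (fun _ : Fin n => (Set.univ : Set (F2 d))) := by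
  have h0 : (0:ℕ) < d := by omega
  have h1 : (1:ℕ) < d := by omega
  have h2 : (2:ℕ) < d := by omega
  set Qf : F2 d → ZMod 2 := fun ω => ω ⟨1,h1⟩ + ω ⟨2,h2⟩ + ω ⟨0,h0⟩ * ω ⟨2,h2⟩ with hQf
  set i0 : Fin n := ⟨0, by omega⟩ with hi0
  set i1 : Fin n := ⟨1, by omega⟩ with hi1
  set i2 : Fin n := ⟨2, by omega⟩ with hi2
  have hne01 : i0 ≠ i1 := by simp [hi0, hi1, Fin.ext_iff]
  have hne02 : i0 ≠ i2 := by simp [hi0, hi2, Fin.ext_iff]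
  have hne12 : i1 ≠ i2 := by simp [hi1, hi2, Fin.ext_iff]
  set T : Finset (Fin n) := {i0, i1, i2} with hT
  set F : (Fin n → F2 d → ℝ) → ℝ := fun y =>
    (∑ ω ∈ Finset.univ.filter (fun ω : F2 d => Qf ω = 1), y i0 ω) +
    (∑ ω ∈ Finset.univ.filter (fun ω : F2 d => Qf ω = 0), y i2 ω) +
    (∑ i ∈ Tᶜ, ∑ ω ∈ Finset.univ.filter (fun ω : F2 d => ω ≠ 0), y i ω) -
    y i1 0 with hF
  -- the halfspace 0 ≤ F y contains CTP
  have hsub : CTP (fun _ : Fin n => (Set.univ : Set (F2 d))) ⊆ {y | 0 ≤ F y} := by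
    apply convexHull_min
    · rintro _ ⟨ξ, hξ, rfl⟩
      have hcyc := hξ.2
      have e1 : (∑ ω ∈ Finset.univ.filter (fun ω : F2 d => Qf ω = 1), incVec ξ i0 ω) =
          if Qf (ξ i0) = 1 then (1:ℝ) else 0 :=
        sum_filter_ind' (fun ω : F2 d => Qf ω = 1) (ξ i0) 1
      have e2 : (∑ ω ∈ Finset.univ.filter (fun ω : F2 d => Qf ω = 0), incVec ξ i2 ω) =
          if Qf (ξ i2) = 0 then (1:ℝ) else 0 :=
        sum_filter_ind' (fun ω : F2 d => Qf ω = 0) (ξ i2) 1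
      have e3 : ∀ i : Fin n, (∑ ω ∈ Finset.univ.filter (fun ω : F2 d => ω ≠ 0), incVec ξ i ω) =
          if ξ i ≠ 0 then (1:ℝ) else 0 := by
        intro i
        exact sum_filter_ind' (fun ω : F2 d => ω ≠ 0) (ξ i) 1
      have e4 : incVec ξ i1 0 = if ξ i1 = 0 then (1:ℝ) else 0 := rfl
      have hC : 0 ≤ ∑ i ∈ Tᶜ, ∑ ω ∈ Finset.univ.filter (fun ω : F2 d => ω ≠ 0), incVec ξ i ω := by
        refine Finset.sum_nonneg fun i _ => Finset.sum_nonneg fun ω _ => ?_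
        unfold incVec; split <;> norm_num
      show 0 ≤ F (incVec ξ)
      rw [hF]
      simp only [e1, e2, e4]
      by_cases hz1 : ξ i1 = 0
      · by_cases hbig : ∃ i ∈ Tᶜ, ξ i ≠ 0
        · obtain ⟨i, hiT, hine⟩ := hbig
          have : (1:ℝ) ≤ ∑ i ∈ Tᶜ, ∑ ω ∈ Finset.univ.filter
              (fun ω : F2 d => ω ≠ 0), incVec ξ i ω := by
            have hval : (∑ ω ∈ Finset.univ.filter (fun ω : F2 d => ω ≠ 0), incVec ξ i ω) = 1 := by
              rw [e3 i, if_pos hine]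
            rw [← hval]
            refine Finset.single_le_sum (fun j _ => Finset.sum_nonneg fun ω _ => ?_) hiT
            unfold incVec; split <;> norm_num
          have t1 : (0:ℝ) ≤ if Qf (ξ i0) = 1 then (1:ℝ) else 0 := by split <;> norm_num
          have t2 : (0:ℝ) ≤ if Qf (ξ i2) = 0 then (1:ℝ) else 0 := by split <;> norm_num
          have t4 : (if ξ i1 = 0 then (1:ℝ) else 0) ≤ 1 := by split <;> norm_num
          linarith
        · push_neg at hbig
          have hsum3 : ξ i0 + ξ i1 + ξ i2 = 0 := by
            have : (∑ i ∈ T, ξ i) = ∑ i, ξ i := by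
              refine Finset.sum_subset (Finset.subset_univ T) ?_
              intro i _ hiT
              exact hbig i (Finset.mem_compl.mpr hiT)
            rw [hcyc] at this
            rw [← this, hT, Finset.sum_insert (by simp [hne01, hne02]),
              Finset.sum_insert (by simp [hne12]), Finset.sum_singleton]
            ring
          have h02 : ξ i2 = ξ i0 := by
            rw [hz1, add_zero] at hsum3
            funext j
            have := congrFun hsum3 j
            exact zmod2_add_eq_zero this
          rw [if_pos hz1, h02]
          rcases zmod2_cases (Qf (ξ i0)) with hq | hq <;>
            rw [hq] <;> simp <;> linarith [hC]
      · rw [if_neg hz1]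
        have t1 : (0:ℝ) ≤ if Qf (ξ i0) = 1 then (1:ℝ) else 0 := by split <;> norm_num
        have t2 : (0:ℝ) ≤ if Qf (ξ i2) = 0 then (1:ℝ) else 0 := by split <;> norm_num
        linarith
    · intro u hu v hv p q hp hq hpq
      simp only [Set.mem_setOf_eq] at hu hv ⊢
      have hlin : F (p • u + q • v) = p * F u + q * F v := by
        rw [hF]
        simp only [Pi.add_apply, Pi.smul_apply, smul_eq_mul, Finset.sum_add_distrib,
          mul_add, mul_sub, Finset.mul_sum]
        ring
      rw [hlin]
      have := mul_nonneg hp hu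
      have := mul_nonneg hq hv
      linarith
  -- but F (xpt d n) < 0
  intro hmem
  have hge := hsub hmem
  have hlt : F (xpt d n) = -(2:ℝ)⁻¹ := by
    have hq_pt : ∀ α β γ : ZMod 2, Qf (pt d α β γ) = β + γ + α * γ := by
      intro α β γ
      rw [hQf]
      simp [pt]
    have eA : (∑ ω ∈ Finset.univ.filter (fun ω : F2 d => Qf ω = 1), xpt d n i0 ω) = 0 := by
      rw [xpt_fsum0 i0 rfl]
      simp only [hq_pt]
      rw [if_neg (by decide), if_neg (by decide), if_neg (by decide), if_neg (by decide)]
      norm_num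
    have eB : (∑ ω ∈ Finset.univ.filter (fun ω : F2 d => Qf ω = 0), xpt d n i2 ω) = 0 := by
      rw [xpt_fsum2 i2 rfl]
      simp only [hq_pt]
      rw [if_neg (by decide), if_neg (by decide), if_neg (by decide), if_neg (by decide)]
      norm_num
    have eC : (∑ i ∈ Tᶜ, ∑ ω ∈ Finset.univ.filter (fun ω : F2 d => ω ≠ 0), xpt d n i ω) = 0 := by
      refine Finset.sum_eq_zero fun i hiT => ?_
      have hi3 : 3 ≤ (i:ℕ) := by
        rw [Finset.mem_compl, hT] at hiT
        simp only [Finset.mem_insert, Finset.mem_singleton] at hiT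
        push_neg at hiT
        obtain ⟨hh0, hh1, hh2⟩ := hiT
        have : (i:ℕ) ≠ 0 := fun h => hh0 (Fin.ext h)
        have : (i:ℕ) ≠ 1 := fun h => hh1 (Fin.ext h)
        have : (i:ℕ) ≠ 2 := fun h => hh2 (Fin.ext h)
        omega
      rw [xpt_fsum3 i hi3, if_neg]
      rw [pt_zero]
      simp
    have eD : xpt d n i1 (0 : F2 d) = (2:ℝ)⁻¹ := by
      have hx1 : xpt d n i1 (0 : F2 d) =
          (if (0:F2 d) = pt d 0 0 0 then (2:ℝ)⁻¹ else 0) +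
          (if (0:F2 d) = pt d 0 1 0 then (2:ℝ)⁻¹ else 0) := by
        simp only [xpt]
        norm_num
      rw [hx1, if_pos (pt_zero d).symm, if_neg ?_]
      · norm_num
      · intro h
        have := congrFun h ⟨1, h1⟩
        simp [pt] at this
    rw [hF]
    simp only [eA, eB, eC, eD]
    norm_num
  have hge' : 0 ≤ F (xpt d n) := hge
  rw [hlt] at hge'
  norm_num at hge'

theorem statement14 (d n : ℕ) (hd : 3 ≤ d) (hn : 3 ≤ n) :
    CTP (fun _ : Fin n => (Set.univ : Set (F2 d))) ⊂
      { x ∈ TP (fun _ : Fin n => (Set.univ : Set (F2 d))) |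
        ∀ (η : F2 d), η ≠ 0 → ∀ I : Finset (Fin n), Odd I.card →
          1 ≤ losLHS (fun _ : Fin n => (Set.univ : Set (F2 d))) η I x } := by
  have hsub : CTP (fun _ : Fin n => (Set.univ : Set (F2 d))) ⊆
      { x ∈ TP (fun _ : Fin n => (Set.univ : Set (F2 d))) |
        ∀ (η : F2 d), η ≠ 0 → ∀ I : Finset (Fin n), Odd I.card →
          1 ≤ losLHS (fun _ : Fin n => (Set.univ : Set (F2 d))) η I x } := by
    apply convexHull_min
    · rintro _ ⟨ξ, hξ, rfl⟩
      exact ⟨incVec_tp ξ, fun η _ I hI => incVec_los ξ hξ.2 η I hI⟩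
    · intro u hu v hv p q hp hq hpq
      obtain ⟨⟨hu1, hu2, hu3⟩, hu4⟩ := hu
      obtain ⟨⟨hv1, hv2, hv3⟩, hv4⟩ := hv
      refine ⟨⟨?_, ?_, ?_⟩, ?_⟩
      · intro i ω
        have := mul_nonneg hp (hu1 i ω)
        have := mul_nonneg hq (hv1 i ω)
        simp only [Pi.add_apply, Pi.smul_apply, smul_eq_mul]
        linarith
      · intro i ω h
        simp only [Pi.add_apply, Pi.smul_apply, smul_eq_mul, hu2 i ω h, hv2 i ω h]
        ring
      · intro i
        simp only [Pi.add_apply, Pi.smul_apply, smul_eq_mul]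
        rw [Finset.sum_add_distrib, ← Finset.mul_sum, ← Finset.mul_sum, hu3 i, hv3 i]
        linarith
      · intro η hη I hI
        rw [losLHS_lin]
        have l1 := hu4 η hη I hI
        have l2 := hv4 η hη I hI
        nlinarith
  rw [Set.ssubset_iff_of_subset hsub]
  exact ⟨xpt d n,
    ⟨⟨fun i ω => xpt_nonneg d n i ω, fun i ω h => absurd (Set.mem_univ ω) h,
      fun i => xpt_sum d n i⟩,
      fun η _ I hI => xpt_los hd hn η I hI⟩,
    xpt_notMem hd hn⟩
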